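/- Continuity of the evaluation homomorphisms under gluing points: for fixed pairwise distinct z_1,…,z_k, z ∈ ℂ× and pairwise distinct u_1,…,u_{n−k}, and for every u ∈ U(g_−), lim_{s→0} φ_{z_1,…,z_k, z+su_1,…,z+su_{n−k}}(u) = (D_{k,n} ∘ φ_{z_1,…,z_k,z})(u), where D_{k,n} = id^{⊗k} ⊗ diag_{n−k} : U(g)^{⊗(k+1)} → U(g)^{⊗n} and diag_{n−k} is induced by the diagonal embedding g → g^{⊕(n−k)}. -/

import Mathlib

open scoped TensorProduct
open Polynomial

noncomputable instance negLoopAux (g : Type*) [LieRing g] [LieAlgebra ℂ g] :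
    LieAlgebra ℂ (Polynomial ℂ ⊗[ℂ] g) :=
  { lie_smul := fun c x y => by
      rw [← algebraMap_smul (Polynomial ℂ) c y,
        lie_smul (algebraMap ℂ (Polynomial ℂ) c) x y, algebraMap_smul] }

/-- The Lie algebra `g⁻ = g ⊗ t⁻¹ℂ[t⁻¹]`, realized (with `X = t⁻¹`) as the Lie subalgebra of
`ℂ[X] ⊗ g` generated by the elements `X^(k+1) ⊗ x`; the generator `X^(k+1) ⊗ x` corresponds
to `x ⊗ t^(-(k+1))`. -/
noncomputable def negLoop (g : Type*) [LieRing g] [LieAlgebra ℂ g] :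
    LieSubalgebra ℂ (Polynomial ℂ ⊗[ℂ] g) :=
  LieSubalgebra.lieSpan ℂ (Polynomial ℂ ⊗[ℂ] g)
    {u : Polynomial ℂ ⊗[ℂ] g | ∃ (k : ℕ) (x : g), u = ((X : ℂ[X]) ^ (k + 1)) ⊗ₜ[ℂ] x}

lemma negLoop_gen_mem (g : Type*) [LieRing g] [LieAlgebra ℂ g] (k : ℕ) (x : g) :
    (((X : ℂ[X]) ^ (k + 1)) ⊗ₜ[ℂ] x) ∈ negLoop g :=
  LieSubalgebra.subset_lieSpan ⟨k, x, rfl⟩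

open scoped PiTensorProduct
open Filter Topology

set_option maxHeartbeats 1000000 in
set_option synthInstance.maxHeartbeats 100000 in
open Classical in
/-- continuity of the evaluation homomorphisms under gluing of points:
as `s → 0`, `φ_{z_1,…,z_k,z₀+s·c_1,…,z₀+s·c_{n-k}} → D_{k,n} ∘ φ_{z_1,…,z_k,z₀}` (weakly,
i.e. composed with any linear functional), where `D_{k,n} = id^⊗k ⊗ diag_{n-k}`. -/
theorem evaluation_tendsto_glued
    (g : Type*) [LieRing g] [LieAlgebra ℂ g]
    (n k : ℕ) (hk : k ≤ n)
    (z : Fin k → ℂ) (z₀ : ℂ) (c : Fin (n - k) → ℂ)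
    (hzinj : Function.Injective z) (hz₀ : ∀ i, z i ≠ z₀) (hcinj : Function.Injective c)
    (hz : ∀ i, z i ≠ 0) (hz₀0 : z₀ ≠ 0)
    -- the one-slot embeddings of `g` into `U(g)^⊗(k+1)` and `U(g)^⊗n`
    (Yk : g → Fin (k + 1) → ⨂[ℂ] (_ : Fin (k + 1)), UniversalEnvelopingAlgebra ℂ g)
    (hYk : ∀ (x : g) (i : Fin (k + 1)), Yk x i = PiTensorProduct.tprod ℂ
      (Function.update (fun _ => (1 : UniversalEnvelopingAlgebra ℂ g)) i
        (UniversalEnvelopingAlgebra.ι ℂ x)))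
    (Yn : g → Fin n → ⨂[ℂ] (_ : Fin n), UniversalEnvelopingAlgebra ℂ g)
    (hYn : ∀ (x : g) (i : Fin n), Yn x i = PiTensorProduct.tprod ℂ
      (Function.update (fun _ => (1 : UniversalEnvelopingAlgebra ℂ g)) i
        (UniversalEnvelopingAlgebra.ι ℂ x)))
    -- the family of evaluation homomorphisms at `z_1, …, z_k, z₀+s·c_1, …, z₀+s·c_{n-k}`
    (φ : ℂ → (UniversalEnvelopingAlgebra ℂ (negLoop g) →ₐ[ℂ]
      ⨂[ℂ] (_ : Fin n), UniversalEnvelopingAlgebra ℂ g))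
    (hφ : ∀ s : ℂ, (∀ j, z₀ + s * c j ≠ 0) → ∀ (m : ℕ) (x : g),
      φ s (UniversalEnvelopingAlgebra.ι ℂ
          (⟨((X : ℂ[X]) ^ (m + 1)) ⊗ₜ[ℂ] x, negLoop_gen_mem g m x⟩ : negLoop g))
        = ∑ i : Fin n,
            ((if h : (i : ℕ) < k then z ⟨i, h⟩
              else z₀ + s * c ⟨(i : ℕ) - k, by omega⟩) ^ (m + 1))⁻¹ • Yn x i)
    -- the evaluation homomorphism at `z_1, …, z_k, z₀`
    (ψ : UniversalEnvelopingAlgebra ℂ (negLoop g) →ₐ[ℂ]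
      ⨂[ℂ] (_ : Fin (k + 1)), UniversalEnvelopingAlgebra ℂ g)
    (hψ : ∀ (m : ℕ) (x : g),
      ψ (UniversalEnvelopingAlgebra.ι ℂ
          (⟨((X : ℂ[X]) ^ (m + 1)) ⊗ₜ[ℂ] x, negLoop_gen_mem g m x⟩ : negLoop g))
        = ∑ i : Fin (k + 1),
            ((if h : (i : ℕ) < k then z ⟨i, h⟩ else z₀) ^ (m + 1))⁻¹ • Yk x i)
    -- the homomorphism `D_{k,n} = id^⊗k ⊗ diag_{n-k}`
    (D : (⨂[ℂ] (_ : Fin (k + 1)), UniversalEnvelopingAlgebra ℂ g) →ₐ[ℂ]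
      ⨂[ℂ] (_ : Fin n), UniversalEnvelopingAlgebra ℂ g)
    (hD1 : ∀ (x : g) (j : Fin (k + 1)) (h : (j : ℕ) < k),
      D (Yk x j) = Yn x ⟨(j : ℕ), by omega⟩)
    (hD2 : ∀ x : g, D (Yk x ⟨k, Nat.lt_succ_self k⟩)
      = ∑ i ∈ Finset.univ.filter (fun i : Fin n => k ≤ (i : ℕ)), Yn x i) :
    ∀ u : UniversalEnvelopingAlgebra ℂ (negLoop g),
      ∀ ℓ : (⨂[ℂ] (_ : Fin n), UniversalEnvelopingAlgebra ℂ g) →ₗ[ℂ] ℂ,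
        Tendsto (fun s : ℂ => ℓ (φ s u)) (𝓝[≠] (0 : ℂ)) (𝓝 (ℓ (D (ψ u)))) := by
  classical
  -- the set of good parameters is eventually attained near 0
  have hS : ∀ᶠ s in 𝓝[≠] (0 : ℂ), ∀ j, z₀ + s * c j ≠ 0 := by
    refine Filter.Eventually.filter_mono nhdsWithin_le_nhds ?_
    rw [eventually_all]
    intro j
    have hc : Tendsto (fun s : ℂ => z₀ + s * c j) (𝓝 0) (𝓝 (z₀ + 0 * c j)) := by
      exact (continuous_const.add (continuous_id.mul continuous_const)).tendsto 0
    rw [zero_mul, add_zero] at hc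
    exact hc.eventually (eventually_ne_nhds hz₀0)
  -- the key predicate
  set Q : UniversalEnvelopingAlgebra ℂ (negLoop g) → Prop := fun u =>
    ∃ (ι : Type) (_ : Fintype ι) (f : ι → ℂ → ℂ)
      (v : ι → ⨂[ℂ] (_ : Fin n), UniversalEnvelopingAlgebra ℂ g),
      (∀ i, Tendsto (f i) (𝓝[≠] (0 : ℂ)) (𝓝 (f i 0))) ∧
      (∀ᶠ s in 𝓝[≠] (0 : ℂ), φ s u = ∑ i, f i s • v i) ∧
      (D (ψ u) = ∑ i, f i 0 • v i) with hQdef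
  have hQalg : ∀ r : ℂ, Q (algebraMap ℂ _ r) := by
    intro r
    refine ⟨Unit, inferInstance, fun _ _ => (1 : ℂ), fun _ => algebraMap ℂ _ r,
      fun _ => tendsto_const_nhds, Filter.Eventually.of_forall fun s => ?_, ?_⟩
    · simp [AlgHom.commutes]
    · simp [AlgHom.commutes]
  have hQzero : Q 0 := by
    have := hQalg 0
    rwa [map_zero] at this
  have hQadd : ∀ a b, Q a → Q b → Q (a + b) := by
    rintro a b ⟨ι₁, _, f₁, v₁, hf₁, he₁, hd₁⟩ ⟨ι₂, _, f₂, v₂, hf₂, he₂, hd₂⟩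
    refine ⟨ι₁ ⊕ ι₂, inferInstance, Sum.elim f₁ f₂, Sum.elim v₁ v₂, ?_, ?_, ?_⟩
    · rintro (i | i)
      · exact hf₁ i
      · exact hf₂ i
    · filter_upwards [he₁, he₂] with s h1 h2
      rw [map_add, h1, h2, Fintype.sum_sum_type]
      rfl
    · rw [map_add, map_add, hd₁, hd₂, Fintype.sum_sum_type]
      rfl
  have hQsmul : ∀ (r : ℂ) a, Q a → Q (r • a) := by
    rintro r a ⟨ι₁, _, f₁, v₁, hf₁, he₁, hd₁⟩
    refine ⟨ι₁, inferInstance, fun i s => r * f₁ i s, v₁, ?_, ?_, ?_⟩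
    · exact fun i => tendsto_const_nhds.mul (hf₁ i)
    · filter_upwards [he₁] with s h1
      rw [map_smul (φ s), h1, Finset.smul_sum]
      simp [mul_smul]
    · rw [map_smul ψ, map_smul D, hd₁, Finset.smul_sum]
      simp [mul_smul]
  have hQmul : ∀ a b, Q a → Q b → Q (a * b) := by
    rintro a b ⟨ι₁, _, f₁, v₁, hf₁, he₁, hd₁⟩ ⟨ι₂, _, f₂, v₂, hf₂, he₂, hd₂⟩
    refine ⟨ι₁ × ι₂, inferInstance, fun p s => f₁ p.1 s * f₂ p.2 s,
      fun p => v₁ p.1 * v₂ p.2, ?_, ?_, ?_⟩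
    · exact fun p => (hf₁ p.1).mul (hf₂ p.2)
    · filter_upwards [he₁, he₂] with s h1 h2
      rw [map_mul, h1, h2, Finset.sum_mul_sum, ← Finset.sum_product']
      exact Finset.sum_congr rfl fun p _ => smul_mul_smul_comm _ _ _ _
    · rw [map_mul, map_mul, hd₁, hd₂, Finset.sum_mul_sum, ← Finset.sum_product']
      exact Finset.sum_congr rfl fun p _ => smul_mul_smul_comm _ _ _ _
  -- generators
  have hQgen : ∀ (m : ℕ) (x : g),
      Q (UniversalEnvelopingAlgebra.ι ℂ
        (⟨((X : ℂ[X]) ^ (m + 1)) ⊗ₜ[ℂ] x, negLoop_gen_mem g m x⟩ : negLoop g)) := by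
    intro m x
    refine ⟨Fin n, inferInstance,
      fun i s => ((if h : (i : ℕ) < k then z ⟨i, h⟩
        else z₀ + s * c ⟨(i : ℕ) - k, by omega⟩) ^ (m + 1))⁻¹,
      fun i => Yn x i, ?_, ?_, ?_⟩
    · intro i
      by_cases h : (i : ℕ) < k
      · simp only [dif_pos h]
        exact tendsto_const_nhds
      · simp only [dif_neg h]
        refine Filter.Tendsto.mono_left ?_ nhdsWithin_le_nhds
        have hc : Tendsto (fun s : ℂ => z₀ + s * c ⟨(i : ℕ) - k, by omega⟩) (𝓝 0)
            (𝓝 (z₀ + 0 * c ⟨(i : ℕ) - k, by omega⟩)) :=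
          (continuous_const.add (continuous_id.mul continuous_const)).tendsto 0
        have hne : (z₀ + 0 * c ⟨(i : ℕ) - k, by omega⟩) ^ (m + 1) ≠ 0 := by
          rw [zero_mul, add_zero]
          exact pow_ne_zero _ hz₀0
        exact ((hc.pow (m + 1)).inv₀ hne)
    · filter_upwards [hS] with s hs
      exact hφ s hs m x
    · rw [hψ m x, map_sum]
      -- compute the left side
      have hL : ∑ i : Fin (k + 1),
          D ((((if h : (i : ℕ) < k then z ⟨i, h⟩ else z₀) ^ (m + 1))⁻¹ • Yk x i))
          = (∑ i : Fin k, ((z i ^ (m + 1))⁻¹ • Yn x ⟨(i : ℕ), by omega⟩))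
            + (z₀ ^ (m + 1))⁻¹ •
              ∑ i ∈ Finset.univ.filter (fun i : Fin n => k ≤ (i : ℕ)), Yn x i := by
        rw [Fin.sum_univ_castSucc]
        congr 1
        · refine Finset.sum_congr rfl fun i _ => ?_
          have hi : ((i.castSucc : Fin (k + 1)) : ℕ) < k := by
            simpa using i.2
          rw [map_smul, dif_pos hi, hD1 x i.castSucc hi]
          simp
        · have hlast : ((Fin.last k : Fin (k + 1)) : ℕ) = k := rfl
          have hnot : ¬ ((Fin.last k : Fin (k + 1)) : ℕ) < k := by omega
          rw [map_smul, dif_neg hnot]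
          congr 1
          have : (Fin.last k : Fin (k + 1)) = ⟨k, Nat.lt_succ_self k⟩ := rfl
          rw [this, hD2]
      rw [hL]
      -- compute the right side
      rw [← Finset.sum_filter_add_sum_filter_not Finset.univ (fun i : Fin n => (i : ℕ) < k)]
      congr 1
      · refine Finset.sum_bij (fun (i : Fin k) _ => (⟨(i : ℕ), by omega⟩ : Fin n)) ?_ ?_ ?_ ?_
        · intro a _
          simp [Finset.mem_filter, a.2]
        · intro a _ b _ h
          simpa [Fin.ext_iff] using h
        · intro b hb
          have hbk : (b : ℕ) < k := by simpa using hb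
          exact ⟨⟨(b : ℕ), hbk⟩, Finset.mem_univ _, Fin.eq_of_val_eq rfl⟩
        · intro a _
          simp
      · rw [Finset.smul_sum]
        refine Finset.sum_congr ?_ fun i hi => ?_
        · ext i
          simp [not_lt]
        · have h : ¬ (i : ℕ) < k := by
            simpa [not_lt] using (Finset.mem_filter.mp hi).2
          simp [h]
  -- all elements of `negLoop g` map to elements satisfying `Q`
  have hQι : ∀ y : negLoop g, Q (UniversalEnvelopingAlgebra.ι ℂ y) := by
    have hQsub : ∀ a b, Q a → Q b → Q (a - b) := by
      intro a b ha hb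
      have := hQadd a ((-1 : ℂ) • b) ha (hQsmul (-1) b hb)
      rwa [neg_one_smul, ← sub_eq_add_neg] at this
    set K : LieSubalgebra ℂ (Polynomial ℂ ⊗[ℂ] g) :=
      { carrier := {w | ∃ h : w ∈ negLoop g, Q (UniversalEnvelopingAlgebra.ι ℂ (⟨w, h⟩ : negLoop g))}
        add_mem' := by
          rintro w₁ w₂ ⟨h₁, hq₁⟩ ⟨h₂, hq₂⟩
          refine ⟨add_mem h₁ h₂, ?_⟩
          have : (⟨w₁ + w₂, add_mem h₁ h₂⟩ : negLoop g) = ⟨w₁, h₁⟩ + ⟨w₂, h₂⟩ := rfl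
          rw [this, map_add]
          exact hQadd _ _ hq₁ hq₂
        zero_mem' := by
          refine ⟨zero_mem _, ?_⟩
          have : ((⟨0, zero_mem _⟩ : negLoop g)) = 0 := rfl
          rw [this, map_zero]
          exact hQzero
        smul_mem' := by
          rintro r w ⟨h, hq⟩
          refine ⟨(negLoop g).smul_mem r h, ?_⟩
          have : (⟨r • w, (negLoop g).smul_mem r h⟩ : negLoop g) = r • ⟨w, h⟩ := rfl
          rw [this, map_smul]
          exact hQsmul r _ hq
        lie_mem' := by
          rintro w₁ w₂ ⟨h₁, hq₁⟩ ⟨h₂, hq₂⟩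
          refine ⟨(negLoop g).lie_mem h₁ h₂, ?_⟩
          have : (⟨⁅w₁, w₂⁆, (negLoop g).lie_mem h₁ h₂⟩ : negLoop g) = ⁅(⟨w₁, h₁⟩ : negLoop g), ⟨w₂, h₂⟩⁆ := rfl
          letI instLR : LieRing (UniversalEnvelopingAlgebra ℂ (negLoop g)) := LieRing.ofAssociativeRing
          letI instLA : LieAlgebra ℂ (UniversalEnvelopingAlgebra ℂ (negLoop g)) := LieAlgebra.ofAssociativeAlgebra
          rw [this, LieHom.map_lie, Ring.lie_def]
          exact hQsub _ _ (hQmul _ _ hq₁ hq₂) (hQmul _ _ hq₂ hq₁)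
        } with hK
    have hle : negLoop g ≤ K := by
      rw [negLoop, LieSubalgebra.lieSpan_le]
      rintro w ⟨m, x, rfl⟩
      exact ⟨negLoop_gen_mem g m x, hQgen m x⟩
    intro y
    obtain ⟨h, hq⟩ := hle y.2
    have : (⟨(y : Polynomial ℂ ⊗[ℂ] g), h⟩ : negLoop g) = y := Subtype.ext rfl
    rwa [this] at hq
  -- all elements of the universal enveloping algebra satisfy `Q`
  have hQall : ∀ u, Q u := by
    intro u
    obtain ⟨a, rfl⟩ : ∃ a, UniversalEnvelopingAlgebra.mkAlgHom ℂ (negLoop g) a = u :=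
      RingCon.mkₐ_surjective _ u
    induction a using TensorAlgebra.induction with
    | algebraMap r => rw [AlgHom.commutes]; exact hQalg r
    | ι y =>
        have := hQι y
        rwa [UniversalEnvelopingAlgebra.ι_apply] at this
    | mul a b ha hb => rw [map_mul]; exact hQmul _ _ ha hb
    | add a b ha hb => rw [map_add]; exact hQadd _ _ ha hb
  -- conclude
  intro u ℓ
  obtain ⟨ι₁, _, f, v, hf, he, hd⟩ := hQall u
  have htend : Tendsto (fun s : ℂ => ∑ i, f i s * ℓ (v i)) (𝓝[≠] (0 : ℂ))
      (𝓝 (∑ i, f i 0 * ℓ (v i))) :=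
    tendsto_finset_sum _ fun i _ => (hf i).mul tendsto_const_nhds
  have heq : (fun s : ℂ => ∑ i, f i s * ℓ (v i)) =ᶠ[𝓝[≠] (0 : ℂ)]
      fun s : ℂ => ℓ (φ s u) := by
    filter_upwards [he] with s hs
    rw [hs, map_sum]
    simp [smul_eq_mul]
  have hfin : ℓ (D (ψ u)) = ∑ i, f i 0 * ℓ (v i) := by
    rw [hd, map_sum]
    simp [smul_eq_mul]
  rw [hfin]
  exact htend.congr' heq
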